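/- Let u : M → [0,1) be a proper continuous function on a connected manifold M with connected compact boundary ∂M = u⁻¹(0), and suppose u satisfies the strong maximum principle (u attains no interior local minimum and no interior local maximum on any compact subdomain unless constant). Then for every τ ∈ (0,1), the open sub-level set {u < τ} is connected, and every connected component of {u < τ} has nonempty intersection with ∂M. -/
import Mathlib


open Set

/-- Topological lemma (Subsection 1.3): let `u : M → [0,1)` be a proper continuous
function on a connected manifold `M` whose boundary `∂M = u⁻¹(0)` is compact,
connected and nonempty, and suppose `u` satisfies the strong maximum principle in
the form that `u` has no local minimum and no local maximum at any point off the
boundary. Then for every `τ ∈ (0,1)` the open sub-level set `{u < τ}` is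
connected, and every connected component of `{u < τ}` meets `∂M`. -/
theorem sublevel_connected {M : Type*} [TopologicalSpace M] [T2Space M]
    [LocallyConnectedSpace M] [ConnectedSpace M]
    (u : M → ℝ) (hu : Continuous u) (hrange : ∀ x, u x ∈ Ico (0 : ℝ) 1)
    (hproper : ∀ τ < (1 : ℝ), IsCompact {x | u x ≤ τ})
    (hbdry : IsConnected (u ⁻¹' {0})) (hbdry_cpt : IsCompact (u ⁻¹' {0}))
    (hmp : ∀ x, u x ≠ 0 → ¬ IsLocalMin u x ∧ ¬ IsLocalMax u x) :
    ∀ τ ∈ Ioo (0 : ℝ) 1,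
      IsConnected {x | u x < τ} ∧
      ∀ x, u x < τ →
        (connectedComponentIn {x | u x < τ} x ∩ u ⁻¹' {0}).Nonempty := by
  intro τ hτ
  obtain ⟨hτ0, hτ1⟩ := hτ
  set S : Set M := {x | u x < τ} with hSdef
  have hSopen : IsOpen S := isOpen_lt hu continuous_const
  have hBS : u ⁻¹' {0} ⊆ S := by
    intro x hx
    have : u x = 0 := hx
    simp only [hSdef, mem_setOf_eq, this]
    exact hτ0
  -- every component of S meets the boundary
  have key : ∀ x, u x < τ → (connectedComponentIn S x ∩ u ⁻¹' {0}).Nonempty := by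
    intro x hx
    by_contra hempty
    rw [not_nonempty_iff_eq_empty] at hempty
    set C := connectedComponentIn S x with hC
    have hxC : x ∈ C := mem_connectedComponentIn hx
    have hCopen : IsOpen C := hSopen.connectedComponentIn
    have hCsub : C ⊆ S := connectedComponentIn_subset S x
    have hclsub : closure C ⊆ {z | u z ≤ τ} := by
      have h1 : C ⊆ {z | u z ≤ τ} := by
        intro z hz
        show u z ≤ τ
        exact le_of_lt (hCsub hz)
      exact closure_minimal h1 (isClosed_le hu continuous_const)
    have hcpt : IsCompact (closure C) :=
      (hproper τ hτ1).of_isClosed_subset isClosed_closure hclsub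
    obtain ⟨y, hyc, hymin⟩ :=
      hcpt.exists_isMinOn ⟨x, subset_closure hxC⟩ hu.continuousOn
    have hyval : u y < τ := lt_of_le_of_lt (hymin (subset_closure hxC)) hx
    have hyS : y ∈ S := hyval
    -- y lies in C itself
    have hyC : y ∈ C := by
      have h1 : IsOpen (connectedComponentIn S y) := hSopen.connectedComponentIn
      obtain ⟨z, hz1, hz2⟩ :=
        mem_closure_iff.mp hyc _ h1 (mem_connectedComponentIn hyS)
      have e1 : connectedComponentIn S y = connectedComponentIn S z :=
        connectedComponentIn_eq hz1
      have e2 : connectedComponentIn S x = connectedComponentIn S z :=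
        connectedComponentIn_eq hz2
      have e3 : connectedComponentIn S y = C := by rw [hC, e1, e2]
      rw [← e3]
      exact mem_connectedComponentIn hyS
    have hy0 : u y ≠ 0 := by
      intro h
      have : y ∈ C ∩ u ⁻¹' {0} := ⟨hyC, h⟩
      rw [hempty] at this
      exact this
    have hloc : IsLocalMin u y :=
      hymin.isLocalMin (Filter.mem_of_superset (hCopen.mem_nhds hyC) subset_closure)
    exact (hmp y hy0).1 hloc
  refine ⟨?_, key⟩
  obtain ⟨x0, hx0⟩ := hbdry.nonempty
  refine ⟨⟨x0, hBS hx0⟩, isPreconnected_of_forall x0 ?_⟩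
  intro y hy
  refine ⟨connectedComponentIn S y ∪ u ⁻¹' {0},
    union_subset (connectedComponentIn_subset S y) hBS,
    Or.inr hx0, Or.inl (mem_connectedComponentIn hy), ?_⟩
  have hconn : IsConnected (connectedComponentIn S y) :=
    (isConnected_connectedComponentIn_iff).mpr hy
  exact (hconn.union (key y hy) hbdry).isPreconnected
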